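/- Fix α, β, γ ∈ ℚ and let f ∈ ℚ⟦X⟧ be a power series with zero constant term satisfying f = X + α·X²·f + β·X²·f² + γ·f². Let c ∈ ℚ⟦X⟧ be the unique power series with c = 1 + X·c². Then f = X·(1 - αX²)⁻¹ · (c ∘ (X·(γ + βX²)·(1 - αX²)⁻²)), where ∘ denotes substitution (well-defined since X(γ+βX²)/(1-αX²)² has zero constant term). Equivalently, f/X = (1/(1-αx²))·c( x(γ+βx²)/(1-αx²)² ). -/

import Mathlib

/-- Composition `u ∘ f` of formal power series (substitution of `f` into `u`), valid
when `f` has zero constant term: the coefficient of `X^n` is `∑_{k ≤ n} u_k [X^n] f^k`. -/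
noncomputable def composePS (u f : PowerSeries ℚ) : PowerSeries ℚ :=
  PowerSeries.mk fun n =>
    ∑ k ∈ Finset.range (n + 1), PowerSeries.coeff k u * PowerSeries.coeff n (f ^ k)

open PowerSeries

lemma aux_coeff_pow_eq_zero {f : ℚ⟦X⟧} (hf : constantCoeff f = 0) {n k : ℕ} (h : n < k) :
    coeff n (f ^ k) = 0 := by
  have hd : (X : ℚ⟦X⟧) ^ k ∣ f ^ k := pow_dvd_pow_of_dvd (X_dvd_iff.mpr hf) k
  exact X_pow_dvd_iff.mp hd n h

lemma aux_coeff_composePS {f : ℚ⟦X⟧} (hf : constantCoeff f = 0) (u : ℚ⟦X⟧) {n N : ℕ}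
    (h : n < N) :
    coeff n (composePS u f) = ∑ k ∈ Finset.range N, coeff k u * coeff n (f ^ k) := by
  rw [composePS, coeff_mk]
  refine Finset.sum_subset (Finset.range_subset_range.mpr h) ?_
  intro k _ hk
  simp only [Finset.mem_range, not_lt] at hk
  rw [aux_coeff_pow_eq_zero hf (by omega), mul_zero]

lemma aux_coeff_eval₂ {f : ℚ⟦X⟧} (hf : constantCoeff f = 0) (P : Polynomial ℚ) (n : ℕ) :
    coeff n (P.eval₂ (C) f) =
      ∑ k ∈ Finset.range (n + 1), P.coeff k * coeff n (f ^ k) := by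
  have hd : P.natDegree < max (P.natDegree + 1) (n + 1) := lt_of_lt_of_le (Nat.lt_succ_self _)
    (le_max_left _ _)
  rw [Polynomial.eval₂_eq_sum_range' (C) hd f, map_sum]
  have : ∀ k ∈ Finset.range (max (P.natDegree + 1) (n + 1)),
      coeff n (C (P.coeff k) * f ^ k) = P.coeff k * coeff n (f ^ k) := by
    intro k _; rw [coeff_C_mul]
  rw [Finset.sum_congr rfl this]
  refine (Finset.sum_subset (Finset.range_subset_range.mpr (le_max_right _ _)) ?_).symm
  intro k _ hk
  simp only [Finset.mem_range, not_lt] at hk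
  rw [aux_coeff_pow_eq_zero hf (by omega), mul_zero]

lemma aux_coeff_composePS_eval₂ {f : ℚ⟦X⟧} (hf : constantCoeff f = 0) (u : ℚ⟦X⟧) {n N : ℕ}
    (h : n < N) :
    coeff n (composePS u f) = coeff n ((trunc N u).eval₂ (C) f) := by
  rw [aux_coeff_eval₂ hf, aux_coeff_composePS hf u (Nat.lt_succ_self n)]
  refine Finset.sum_congr rfl fun k hk => ?_
  simp only [Finset.mem_range] at hk
  rw [coeff_trunc, if_pos (by omega)]

lemma composePS_one {f : ℚ⟦X⟧} (hf : constantCoeff f = 0) : composePS 1 f = 1 := by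
  ext n
  rw [aux_coeff_composePS hf 1 (Nat.lt_succ_self n)]
  have : ∀ k ∈ Finset.range (n + 1), coeff k (1 : ℚ⟦X⟧) * coeff n (f ^ k)
      = if k = 0 then coeff n (1 : ℚ⟦X⟧) else 0 := by
    intro k _
    rcases eq_or_ne k 0 with rfl | hk
    · simp
    · simp [coeff_one, hk]
  rw [Finset.sum_congr rfl this, Finset.sum_ite_eq' (Finset.range (n + 1)) 0
    (fun _ => coeff n (1 : ℚ⟦X⟧)), if_pos (Finset.mem_range.mpr (Nat.succ_pos n))]

lemma composePS_X {f : ℚ⟦X⟧} (hf : constantCoeff f = 0) : composePS X f = f := by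
  ext n
  rw [aux_coeff_composePS hf X (by omega : n < n + 2)]
  have : ∀ k ∈ Finset.range (n + 2), coeff k (X : ℚ⟦X⟧) * coeff n (f ^ k)
      = if k = 1 then coeff n f else 0 := by
    intro k _
    rcases eq_or_ne k 1 with rfl | hk
    · simp
    · simp [coeff_X, hk]
  rw [Finset.sum_congr rfl this, Finset.sum_ite_eq' (Finset.range (n + 2)) 1
    (fun _ => coeff n f), if_pos (Finset.mem_range.mpr (by omega))]

lemma composePS_mul {f : ℚ⟦X⟧} (hf : constantCoeff f = 0) (u v : ℚ⟦X⟧) :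
    composePS (u * v) f = composePS u f * composePS v f := by
  ext n
  have h1 : coeff n (composePS (u * v) f)
      = coeff n ((trunc (n + 1) u * trunc (n + 1) v).eval₂ (C) f) := by
    rw [aux_coeff_composePS hf (u * v) (Nat.lt_succ_self n), aux_coeff_eval₂ hf]
    refine Finset.sum_congr rfl fun k hk => ?_
    simp only [Finset.mem_range] at hk
    rw [coeff_mul_eq_coeff_trunc_mul_trunc u v (show k < n + 1 by omega),
      ← Polynomial.coe_mul, Polynomial.coeff_coe]
  rw [h1, Polynomial.eval₂_mul, PowerSeries.coeff_mul, PowerSeries.coeff_mul]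
  refine Finset.sum_congr rfl fun p hp => ?_
  rw [Finset.HasAntidiagonal.mem_antidiagonal] at hp
  rw [aux_coeff_composePS_eval₂ hf u (show p.1 < n + 1 by omega),
    aux_coeff_composePS_eval₂ hf v (show p.2 < n + 1 by omega)]

lemma aux_unique (α β γ : ℚ) (p q : PowerSeries ℚ)
    (hp0 : PowerSeries.constantCoeff p = 0) (hq0 : PowerSeries.constantCoeff q = 0)
    (hp : p = PowerSeries.X + PowerSeries.C α * PowerSeries.X ^ 2 * p
      + PowerSeries.C β * PowerSeries.X ^ 2 * p ^ 2 + PowerSeries.C γ * p ^ 2)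
    (hq : q = PowerSeries.X + PowerSeries.C α * PowerSeries.X ^ 2 * q
      + PowerSeries.C β * PowerSeries.X ^ 2 * q ^ 2 + PowerSeries.C γ * q ^ 2) :
    p = q := by
  set M : ℚ⟦X⟧ := C α * X ^ 2 + (C β * X ^ 2 + C γ) * (p + q) with hM
  have key : (1 - M) * (p - q) = 0 := by
    rw [hM]; linear_combination hp - hq
  have hMne : (1 : ℚ⟦X⟧) - M ≠ 0 := by
    intro h
    have := congrArg (constantCoeff) h
    simp [hM, hp0, hq0, constantCoeff_X] at this
  exact sub_eq_zero.mp ((mul_eq_zero.mp key).resolve_left hMne)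

theorem stmt_12 (α β γ : ℚ) (f c : PowerSeries ℚ)
    (hf0 : PowerSeries.constantCoeff f = 0)
    (hf : f = PowerSeries.X + PowerSeries.C α * PowerSeries.X ^ 2 * f
      + PowerSeries.C β * PowerSeries.X ^ 2 * f ^ 2 + PowerSeries.C γ * f ^ 2)
    (hc : c = 1 + PowerSeries.X * c ^ 2) :
    f = PowerSeries.X * (1 - PowerSeries.C α * PowerSeries.X ^ 2)⁻¹
      * composePS c
          (PowerSeries.X * (PowerSeries.C γ + PowerSeries.C β * PowerSeries.X ^ 2)
            * ((1 - PowerSeries.C α * PowerSeries.X ^ 2)⁻¹) ^ 2) := by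
  set A : ℚ⟦X⟧ := (1 - C α * X ^ 2)⁻¹ with hAdef
  have hPc : constantCoeff (1 - C α * X ^ 2 : ℚ⟦X⟧) = 1 := by
    simp [constantCoeff_X]
  have hA : (1 - C α * X ^ 2) * A = 1 :=
    PowerSeries.mul_inv_cancel _ (by rw [hPc]; exact one_ne_zero)
  set w : ℚ⟦X⟧ := X * (C γ + C β * X ^ 2) * A ^ 2 with hwdef
  have hw0 : constantCoeff w = 0 := by
    simp [hwdef, constantCoeff_X]
  set g : ℚ⟦X⟧ := composePS c w with hgdef
  have hg : g = 1 + w * g ^ 2 := by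
    calc g = composePS (1 + X * c ^ 2) w := by rw [hgdef, ← hc]
    _ = composePS 1 w + composePS X w * (composePS c w * composePS c w) := by
        have h2 : composePS (1 + X * c ^ 2 : ℚ⟦X⟧) w
            = composePS 1 w + composePS (X * c ^ 2) w := by
          ext n
          rw [aux_coeff_composePS hw0 _ (Nat.lt_succ_self n), map_add,
            aux_coeff_composePS hw0 1 (Nat.lt_succ_self n),
            aux_coeff_composePS hw0 (X * c ^ 2) (Nat.lt_succ_self n),
            ← Finset.sum_add_distrib]
          exact Finset.sum_congr rfl fun k _ => by rw [map_add, add_mul]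
        rw [h2, pow_two, composePS_mul hw0, composePS_mul hw0]
    _ = 1 + w * g ^ 2 := by
        rw [composePS_one hw0, composePS_X hw0, ← hgdef, pow_two]
  set h : ℚ⟦X⟧ := X * A * g with hhdef
  have hh0 : constantCoeff h = 0 := by
    simp [hhdef, constantCoeff_X]
  have hhE : h = X + C α * X ^ 2 * h + C β * X ^ 2 * h ^ 2 + C γ * h ^ 2 := by
    rw [hhdef, hwdef] at *
    linear_combination (X * g) * hA + X * hg
  exact aux_unique α β γ f h hf0 hh0 hf hhE
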